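/- In the Fock space F of neutral fermions, spanned by vectors |λ⟩ = φ_{λ₁}···φ_{λ_{2r}}|0⟩ indexed by strict partitions λ (padding with λ_{2r}=0 when the length is odd), the operators e_j and f_j act by: e_j|λ⟩ = |e_jλ⟩ if λ has a row of length j+1 and no row of length j (where e_jλ removes the last box of the length-(j+1) row), and e_j|λ⟩ = 0 otherwise; f_j|λ⟩ = |f_jλ⟩ if λ has a row of length j and no row of length j+1 (where f_jλ adds a box to the length-j row, including adding a new row of length 1 when j=0 if λ has no row of length 1), and f_j|λ⟩ = 0 otherwise. -/

import Mathlib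

/-!
Statement 5: in the Fock space `F = 𝖢/I` of neutral fermions (`I` the left
ideal generated by the `φ_k`, `k < 0`), with
`|λ⟩ = φ_{λ₁} ⋯ φ_{λ_{2r}} |0⟩` for a strict partition `λ` (padded with a
trailing `0` when the number of parts is odd), the operators `𝖾_j`, `𝖿_j` act by
removing / adding a box:
`𝖾_j|λ⟩ = |𝖾_jλ⟩` if `λ` has a row of length `j+1` and none of length `j`,
and `𝖾_j|λ⟩ = 0` otherwise; `𝖿_j|λ⟩ = |𝖿_jλ⟩` if `λ` has a row of length `j`
(interpreting `j = 0` as adding a new row of length `1`) and none of length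
`j+1`, and `𝖿_j|λ⟩ = 0` otherwise.
-/

namespace NeutralFermions

noncomputable section

/-- The defining relations of the Clifford algebra of neutral fermions. -/
inductive CRel : FreeAlgebra ℂ ℤ → FreeAlgebra ℂ ℤ → Prop
  | clifford (p q : ℤ) :
      CRel (FreeAlgebra.ι ℂ p * FreeAlgebra.ι ℂ q + FreeAlgebra.ι ℂ q * FreeAlgebra.ι ℂ p)
        (algebraMap ℂ (FreeAlgebra ℂ ℤ)
          (if p = 0 ∧ q = 0 then 2 else if q = -p then (-1 : ℂ) ^ p else 0))

/-- The Clifford algebra `𝖢` of neutral fermions. -/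
abbrev Cl : Type := RingQuot CRel

/-- The generator `φ_k`. -/
def φ (k : ℤ) : Cl := RingQuot.mkAlgHom ℂ CRel (FreeAlgebra.ι ℂ k)

/-- The Chevalley generator `𝖾_j` of `𝔤(B_∞)`. -/
def eC (j : ℕ) : Cl :=
  if j = 0 then φ (-1) * φ 0
  else ((-1 : ℂ) ^ j) • (φ (-(j : ℤ) - 1) * φ (j : ℤ))

/-- The Chevalley generator `𝖿_j` of `𝔤(B_∞)`. -/
def fC (j : ℕ) : Cl :=
  if j = 0 then φ 1 * φ 0
  else ((-1 : ℂ) ^ j) • (φ ((j : ℤ) + 1) * φ (-(j : ℤ)))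

/-- The left ideal `I` of `𝖢` generated by the `φ_k`, `k < 0`. -/
def negIdeal : Submodule Cl Cl :=
  Submodule.span Cl {x | ∃ k : ℤ, k < 0 ∧ x = φ k}

/-- The Fock space `F = 𝖢/I` of neutral fermions, a left `𝖢`-module. -/
abbrev Fock : Type := Cl ⧸ negIdeal

/-- The basis vector `|λ⟩ = φ_{λ₁} ⋯ φ_{λ_{2r}}|0⟩` attached to a strict
partition, given as a strictly decreasing list of positive integers, padded
with a trailing `0` when its length is odd. -/
def vac (l : List ℕ) : Fock :=
  Submodule.Quotient.mk
    (((if Even l.length then l else l ++ [0]).map (fun m => φ (m : ℤ))).prod)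

/-- `𝖾_jλ`: replace the row of length `j+1` by one of length `j`
(deleting it if `j = 0`). -/
def eStep (j : ℕ) (l : List ℕ) : List ℕ :=
  (l.map (fun m => if m = j + 1 then j else m)).filter (fun m => m ≠ 0)

/-- `𝖿_jλ`: replace the row of length `j` by one of length `j+1`
(adding a new row of length `1` when `j = 0`). -/
def fStep (j : ℕ) (l : List ℕ) : List ℕ :=
  if j = 0 then l ++ [1] else l.map (fun m => if m = j then j + 1 else m)

section Lemmas

attribute [-instance] RingQuot.instNeg RingQuot.instMul RingQuot.instAdd
  RingQuot.instSub RingQuot.instOne RingQuot.instZero RingQuot.instNatCast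
  RingQuot.instNatPow RingQuot.instSMulOfAlgebra

lemma φ_rel (p q : ℤ) : φ p * φ q + φ q * φ p =
    algebraMap ℂ Cl (if p = 0 ∧ q = 0 then 2 else if q = -p then (-1 : ℂ) ^ p else 0) := by
  have := RingQuot.mkAlgHom_rel ℂ (CRel.clifford p q)
  simpa [φ, map_add, map_mul] using this

lemma φ_anti {p q : ℤ} (h : ¬(p = 0 ∧ q = 0)) (h2 : q ≠ -p) :
    φ p * φ q = -(φ q * φ p) := by
  have := φ_rel p q
  rw [if_neg h, if_neg h2, map_zero] at this
  exact eq_neg_of_add_eq_zero_left this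

lemma φ0_sq : φ 0 * φ 0 = 1 := by
  have h := φ_rel 0 0
  rw [if_pos ⟨rfl, rfl⟩] at h
  have h2 : (2:ℂ) • (φ 0 * φ 0) = (2:ℂ) • (1 : Cl) := by
    rw [two_smul, h, Algebra.algebraMap_eq_smul_one]
  exact smul_right_injective Cl two_ne_zero h2

lemma φ_sq {j : ℤ} (hj : j ≠ 0) : φ j * φ j = 0 := by
  have h := φ_rel j j
  rw [if_neg (by tauto), if_neg (by omega), map_zero] at h
  have h2 : (2:ℂ) • (φ j * φ j) = (2:ℂ) • (0 : Cl) := by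
    rw [two_smul, h, smul_zero]
  exact smul_right_injective Cl two_ne_zero h2

lemma φ_pair (n : ℕ) (hn : n ≠ 0) :
    φ (-(n:ℤ)) * φ (n:ℤ) = ((-1:ℂ)^n) • (1 : Cl) - φ (n:ℤ) * φ (-(n:ℤ)) := by
  have h := φ_rel (n:ℤ) (-(n:ℤ))
  rw [if_neg (by simp [hn]), if_pos rfl] at h
  rw [zpow_natCast] at h
  rw [Algebra.algebraMap_eq_smul_one] at h
  exact eq_sub_of_add_eq' h


/-- product of φ over a list of naturals -/
def φl (L : List ℕ) : Cl := (L.map (fun m => φ (m : ℤ))).prod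

@[simp] lemma φl_nil : φl [] = 1 := rfl
@[simp] lemma φl_cons (a : ℕ) (t : List ℕ) : φl (a :: t) = φ a * φl t := by
  simp [φl]
lemma φl_append (s t : List ℕ) : φl (s ++ t) = φl s * φl t := by
  simp [φl, List.prod_append]

/-- predicate: φ k anticommutes with φ m -/
def AC (k : ℤ) (m : ℕ) : Prop := ¬(k = 0 ∧ (m:ℤ) = 0) ∧ (m:ℤ) ≠ -k

lemma φ_anti' {k : ℤ} {m : ℕ} (h : AC k m) : φ k * φ (m:ℤ) = -(φ (m:ℤ) * φ k) :=
  φ_anti h.1 h.2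

-- Toolbox: Cl-specific versions of ring/module lemmas (instances on RingQuot
-- don't match generic simp lemmas at reducible transparency).
lemma nm (a b : Cl) : -a * b = -(a * b) := neg_mul a b
lemma mn (a b : Cl) : a * -b = -(a * b) := mul_neg a b
lemma nn (a : Cl) : - -a = a := neg_neg a
lemma sm (s : ℂ) (a b : Cl) : (s • a) * b = s • (a * b) := smul_mul_assoc s a b
lemma ms (s : ℂ) (a b : Cl) : a * (s • b) = s • (a * b) := mul_smul_comm s a b
lemma ss (s t : ℂ) (a : Cl) : s • t • a = (s * t) • a := smul_smul s t a
lemma ns (s : ℂ) (a : Cl) : -(s • a) = (-s) • a := (neg_smul s a).symm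
lemma sneg (s : ℂ) (a : Cl) : s • (-a) = (-s) • a := (smul_neg s a).trans (neg_smul s a).symm
lemma sub_mul' (a b c : Cl) : (a - b) * c = a * c - b * c := sub_mul a b c
lemma mul_sub' (a b c : Cl) : a * (b - c) = a * b - a * c := mul_sub a b c
lemma add_mul' (a b c : Cl) : (a + b) * c = a * c + b * c := add_mul a b c
lemma mul_add' (a b c : Cl) : a * (b + c) = a * b + a * c := mul_add a b c
lemma one_mul' (a : Cl) : 1 * a = a := one_mul a
lemma mul_one' (a : Cl) : a * 1 = a := mul_one a
lemma zero_mul' (a : Cl) : 0 * a = 0 := zero_mul a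
lemma mul_zero' (a : Cl) : a * 0 = 0 := mul_zero a
lemma smul_zero' (s : ℂ) : s • (0 : Cl) = 0 := smul_zero s
lemma neg_zero' : -(0 : Cl) = 0 := neg_zero
lemma smul_one_mul (s : ℂ) (a : Cl) : (s • (1:Cl)) * a = s • a := by
  rw [sm, one_mul']
lemma mul_smul_one (s : ℂ) (a : Cl) : a * (s • (1:Cl)) = s • a := by
  rw [ms, mul_one']
lemma one_smul' (a : Cl) : (1:ℂ) • a = a := one_smul ℂ a

lemma push (k : ℤ) (L : List ℕ) (h : ∀ m ∈ L, AC k m) :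
    φ k * φl L = ((-1:ℂ)^L.length) • (φl L * φ k) := by
  induction L with
  | nil => simp [one_mul', mul_one', one_smul']
  | cons a t ih =>
      have ha := h a (by simp)
      have ht : ∀ m ∈ t, AC k m := fun m hm => h m (by simp [hm])
      rw [φl_cons, ← mul_assoc, φ_anti' ha, nm, mul_assoc, ih ht, ms, ns,
        List.length_cons, pow_succ, ← mul_assoc]
      congr 1
      ring

lemma pushPair (u v : ℤ) (L : List ℕ) (hu : ∀ m ∈ L, AC u m) (hv : ∀ m ∈ L, AC v m) :
    (φ u * φ v) * φl L = φl L * (φ u * φ v) := by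
  rw [mul_assoc, push v L hv, ms, ← mul_assoc, push u L hu, sm, ss,
    ← mul_assoc, ← mul_pow]
  norm_num [one_smul']

/-- shorthand for the quotient map -/
def mkF (x : Cl) : Fock := Submodule.Quotient.mk x

lemma mkF_add (x y : Cl) : mkF (x + y) = mkF x + mkF y := rfl

lemma mul_φ_mem (x : Cl) {k : ℤ} (hk : k < 0) : x * φ k ∈ negIdeal := by
  have h : φ k ∈ negIdeal := Submodule.subset_span ⟨k, hk, rfl⟩
  simpa [smul_eq_mul] using Submodule.smul_mem negIdeal x h

lemma mkF_mul_φ_neg (x : Cl) {k : ℤ} (hk : k < 0) : mkF (x * φ k) = 0 :=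
  (Submodule.Quotient.mk_eq_zero _).mpr (mul_φ_mem x hk)

lemma smul_mkF (c x : Cl) : c • mkF x = mkF (c * x) := by
  rw [← smul_eq_mul]
  exact (Submodule.Quotient.mk_smul negIdeal c x).symm

lemma ns2 (a b : Cl) : -(a - b) = b - a := neg_sub a b
lemma sea (a b : Cl) : a - b = a + -b := sub_eq_add_neg a b
lemma addc (a b : Cl) : a + b = b + a := add_comm a b

lemma φ_pair' (j : ℕ) :
    φ (-(j:ℤ)-1) * φ ((j:ℤ)+1) = ((-1:ℂ)^(j+1)) • (1:Cl) - φ ((j:ℤ)+1) * φ (-(j:ℤ)-1) := by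
  have h := φ_pair (j+1) (by omega)
  have h1 : ((j+1:ℕ):ℤ) = (j:ℤ)+1 := by push_cast; ring
  have h2 : -((j+1:ℕ):ℤ) = -(j:ℤ)-1 := by push_cast; ring
  rw [h2, h1] at h
  exact h

lemma key_e (j : ℕ) (hj : j ≠ 0) (B : List ℕ) (hB : ∀ m ∈ B, m < j) :
    (φ (-(j:ℤ)-1) * φ (j:ℤ)) * (φ ((j:ℤ)+1) * φl B)
      = ((-1:ℂ)^j) • (φ (j:ℤ) * φl B)
        + ((-1:ℂ)^(B.length+1)) •
            (φ ((j:ℤ)+1) * (φ (j:ℤ) * (φl B * φ (-(j:ℤ)-1)))) := by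
  have h1 : φ (j:ℤ) * φ ((j:ℤ)+1) = -(φ ((j:ℤ)+1) * φ (j:ℤ)) :=
    φ_anti (by omega) (by omega)
  have h3 : φ (-(j:ℤ)-1) * φ (j:ℤ) = -(φ (j:ℤ) * φ (-(j:ℤ)-1)) :=
    φ_anti (by omega) (by omega)
  have h4 : φ (-(j:ℤ)-1) * φl B = ((-1:ℂ)^B.length) • (φl B * φ (-(j:ℤ)-1)) :=
    push _ B (fun m hm => ⟨by omega, by have := hB m hm; omega⟩)
  have h2' : ∀ x : Cl, φ (-(j:ℤ)-1) * (φ ((j:ℤ)+1) * x)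
      = ((-1:ℂ)^(j+1)) • x - φ ((j:ℤ)+1) * (φ (-(j:ℤ)-1) * x) := by
    intro x
    rw [← mul_assoc, φ_pair' j, sub_mul', sm, one_mul', mul_assoc]
  have h3' : ∀ x : Cl, φ (-(j:ℤ)-1) * (φ (j:ℤ) * x)
      = -(φ (j:ℤ) * (φ (-(j:ℤ)-1) * x)) := by
    intro x
    rw [← mul_assoc, h3, nm, mul_assoc]
  calc (φ (-(j:ℤ)-1) * φ (j:ℤ)) * (φ ((j:ℤ)+1) * φl B)
      = φ (-(j:ℤ)-1) * ((φ (j:ℤ) * φ ((j:ℤ)+1)) * φl B) := by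
        simp only [mul_assoc]
    _ = φ (-(j:ℤ)-1) * (-(φ ((j:ℤ)+1) * (φ (j:ℤ) * φl B))) := by
        rw [h1]; simp only [nm, mul_assoc]
    _ = -(((-1:ℂ)^(j+1)) • (φ (j:ℤ) * φl B)
          - φ ((j:ℤ)+1) * (φ (-(j:ℤ)-1) * (φ (j:ℤ) * φl B))) := by
        rw [mn, h2' (φ (j:ℤ) * φl B)]
    _ = φ ((j:ℤ)+1) * (-(φ (j:ℤ) * (φ (-(j:ℤ)-1) * φl B)))
          - ((-1:ℂ)^(j+1)) • (φ (j:ℤ) * φl B) := by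
        rw [ns2, h3' (φl B)]
    _ = ((-1:ℂ)^(B.length+1)) •
            (φ ((j:ℤ)+1) * (φ (j:ℤ) * (φl B * φ (-(j:ℤ)-1))))
          - ((-1:ℂ)^(j+1)) • (φ (j:ℤ) * φl B) := by
        rw [h4, ms, ns, ms]
        congr 2
        rw [pow_succ]
        ring
    _ = ((-1:ℂ)^j) • (φ (j:ℤ) * φl B)
          + ((-1:ℂ)^(B.length+1)) •
              (φ ((j:ℤ)+1) * (φ (j:ℤ) * (φl B * φ (-(j:ℤ)-1)))) := by
        rw [sea, ns, addc]
        congr 2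
        rw [pow_succ]
        ring

lemma e_main (j : ℕ) (hj : j ≠ 0) (A B : List ℕ)
    (hA : ∀ m ∈ A, j + 1 < m) (hB : ∀ m ∈ B, m < j) :
    mkF ((φ (-(j:ℤ) - 1) * φ (j:ℤ)) * φl (A ++ (j+1) :: B))
      = mkF (((-1:ℂ)^j) • φl (A ++ j :: B)) := by
  have hc : ((j+1:ℕ):ℤ) = (j:ℤ)+1 := by push_cast; ring
  have hAu : ∀ m ∈ A, AC (-(j:ℤ)-1) m := fun m hm =>
    ⟨by omega, by have := hA m hm; omega⟩
  have hAv : ∀ m ∈ A, AC (j:ℤ) m := fun m hm =>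
    ⟨by have := hA m hm; omega, by have := hA m hm; omega⟩
  rw [φl_append, φl_cons, hc, ← mul_assoc, pushPair _ _ A hAu hAv, mul_assoc,
      key_e j hj B hB, mul_add', mkF_add]
  have hz : mkF (φl A * (((-1:ℂ)^(B.length+1)) •
      (φ ((j:ℤ)+1) * (φ (j:ℤ) * (φl B * φ (-(j:ℤ)-1)))))) = 0 := by
    rw [ms, ← sm]
    simp only [← mul_assoc]
    exact mkF_mul_φ_neg _ (by omega)
  rw [hz, add_zero, ms, φl_append, φl_cons]

lemma mkF_sub (x y : Cl) : mkF (x - y) = mkF x - mkF y := rfl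

lemma key_f (j : ℕ) (hj : j ≠ 0) (B : List ℕ) (hB : ∀ m ∈ B, m < j) :
    (φ ((j:ℤ)+1) * φ (-(j:ℤ))) * (φ (j:ℤ) * φl B)
      = ((-1:ℂ)^j) • (φ ((j:ℤ)+1) * φl B)
        - ((-1:ℂ)^B.length) •
            (φ ((j:ℤ)+1) * (φ (j:ℤ) * (φl B * φ (-(j:ℤ))))) := by
  have h2 := φ_pair j hj
  have h4 : φ (-(j:ℤ)) * φl B = ((-1:ℂ)^B.length) • (φl B * φ (-(j:ℤ))) :=
    push _ B (fun m hm => ⟨by omega, by have := hB m hm; omega⟩)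
  calc (φ ((j:ℤ)+1) * φ (-(j:ℤ))) * (φ (j:ℤ) * φl B)
      = φ ((j:ℤ)+1) * ((φ (-(j:ℤ)) * φ (j:ℤ)) * φl B) := by
        simp only [mul_assoc]
    _ = φ ((j:ℤ)+1) * ((((-1:ℂ)^j) • (1:Cl) - φ (j:ℤ) * φ (-(j:ℤ))) * φl B) := by
        rw [h2]
    _ = ((-1:ℂ)^j) • (φ ((j:ℤ)+1) * φl B)
          - φ ((j:ℤ)+1) * (φ (j:ℤ) * (φ (-(j:ℤ)) * φl B)) := by
        rw [sub_mul', sm, one_mul', mul_sub', ms]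
        simp only [mul_assoc]
    _ = ((-1:ℂ)^j) • (φ ((j:ℤ)+1) * φl B)
          - ((-1:ℂ)^B.length) •
              (φ ((j:ℤ)+1) * (φ (j:ℤ) * (φl B * φ (-(j:ℤ))))) := by
        rw [h4, ms, ms]

lemma f_main (j : ℕ) (hj : j ≠ 0) (A B : List ℕ)
    (hA : ∀ m ∈ A, j + 1 < m) (hB : ∀ m ∈ B, m < j) :
    mkF ((φ ((j:ℤ)+1) * φ (-(j:ℤ))) * φl (A ++ j :: B))
      = mkF (((-1:ℂ)^j) • φl (A ++ (j+1) :: B)) := by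
  have hc : ((j+1:ℕ):ℤ) = (j:ℤ)+1 := by push_cast; ring
  have hAu : ∀ m ∈ A, AC ((j:ℤ)+1) m := fun m hm =>
    ⟨by omega, by have := hA m hm; omega⟩
  have hAv : ∀ m ∈ A, AC (-(j:ℤ)) m := fun m hm =>
    ⟨by omega, by have := hA m hm; omega⟩
  rw [φl_append, φl_cons, ← mul_assoc, pushPair _ _ A hAu hAv, mul_assoc,
      key_f j hj B hB, mul_sub', mkF_sub]
  have hz : mkF (φl A * (((-1:ℂ)^B.length) •
      (φ ((j:ℤ)+1) * (φ (j:ℤ) * (φl B * φ (-(j:ℤ))))))) = 0 := by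
    rw [ms, ← sm]
    simp only [← mul_assoc]
    exact mkF_mul_φ_neg _ (by omega)
  rw [hz, sub_zero, ms, φl_append, φl_cons, hc]

lemma mkF_neg (x : Cl) : mkF (-x) = -mkF x := rfl

@[simp] lemma φl_singleton (m : ℕ) : φl [m] = φ (m:ℤ) := by
  rw [φl_cons, φl_nil, mul_one']

/-- e-kill when `j ∈ l`, `j ≥ 1` : exact zero. -/
lemma φj_kill (j : ℕ) (hj : j ≠ 0) (A B : List ℕ) (hA : ∀ m ∈ A, j < m) :
    φ (j:ℤ) * φl (A ++ j :: B) = 0 := by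
  have hAv : ∀ m ∈ A, AC (j:ℤ) m := fun m hm =>
    ⟨by omega, by have := hA m hm; omega⟩
  rw [φl_append, φl_cons, ← mul_assoc, push _ A hAv, sm, mul_assoc,
    ← mul_assoc (φ (j:ℤ)) (φ (j:ℤ)), φ_sq (by omega : (j:ℤ) ≠ 0),
    zero_mul', mul_zero', smul_zero']

/-- f-kill when `j+1 ∈ l` (any `j`) : exact zero. -/
lemma φf_kill (j : ℕ) (A B : List ℕ) (hA : ∀ m ∈ A, j + 1 < m) :
    (φ ((j:ℤ)+1) * φ (-(j:ℤ))) * φl (A ++ (j+1) :: B) = 0 := by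
  have hc : ((j+1:ℕ):ℤ) = (j:ℤ)+1 := by push_cast; ring
  have hAu : ∀ m ∈ A, AC ((j:ℤ)+1) m := fun m hm =>
    ⟨by omega, by have := hA m hm; omega⟩
  have hAv : ∀ m ∈ A, AC (-(j:ℤ)) m := fun m hm =>
    ⟨by have := hA m hm; omega, by have := hA m hm; omega⟩
  have hvc : φ (-(j:ℤ)) * φ ((j:ℤ)+1) = -(φ ((j:ℤ)+1) * φ (-(j:ℤ))) :=
    φ_anti (by omega) (by omega)
  rw [φl_append, φl_cons, hc, ← mul_assoc, pushPair _ _ A hAu hAv, mul_assoc,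
    mul_assoc (φ ((j:ℤ)+1)) (φ (-(j:ℤ))), ← mul_assoc (φ (-(j:ℤ))), hvc, nm,
    mn,
    show φ ((j:ℤ)+1) * (φ ((j:ℤ)+1) * φ (-(j:ℤ)) * φl B)
        = (φ ((j:ℤ)+1) * φ ((j:ℤ)+1)) * (φ (-(j:ℤ)) * φl B) by
      simp only [mul_assoc],
    φ_sq (by omega : (j:ℤ)+1 ≠ 0), zero_mul', neg_zero', mul_zero']

/-- e-zero when `j ∉ L`, `j+1 ∉ L`, `j ≥ 1`. -/
lemma e_zero2 (j : ℕ) (hj : j ≠ 0) (L : List ℕ)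
    (hL : ∀ m ∈ L, m ≠ j ∧ m ≠ j + 1) :
    mkF ((φ (-(j:ℤ)-1) * φ (j:ℤ)) * φl L) = 0 := by
  have hAu : ∀ m ∈ L, AC (-(j:ℤ)-1) m := fun m hm =>
    ⟨by omega, by have := (hL m hm).2; omega⟩
  have hAv : ∀ m ∈ L, AC (j:ℤ) m := fun m hm =>
    ⟨by omega, by have := (hL m hm).1; omega⟩
  have h3 : φ (-(j:ℤ)-1) * φ (j:ℤ) = -(φ (j:ℤ) * φ (-(j:ℤ)-1)) :=
    φ_anti (by omega) (by omega)
  rw [pushPair _ _ L hAu hAv, h3, mn, mkF_neg, ← mul_assoc]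
  rw [mkF_mul_φ_neg _ (by omega : -(j:ℤ)-1 < 0)]
  exact neg_zero

/-- f-zero when `j ∉ L`, `j ≥ 1`. -/
lemma f_zero2 (j : ℕ) (hj : j ≠ 0) (L : List ℕ) (hL : ∀ m ∈ L, m ≠ j) :
    mkF ((φ ((j:ℤ)+1) * φ (-(j:ℤ))) * φl L) = 0 := by
  have hv : ∀ m ∈ L, AC (-(j:ℤ)) m := fun m hm =>
    ⟨by omega, by have := hL m hm; omega⟩
  rw [mul_assoc, push _ L hv, ms, ← sm]
  simp only [← mul_assoc]
  exact mkF_mul_φ_neg _ (by omega)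

lemma φ_pair1 : φ (-1) * φ (1:ℤ) = (-1:ℂ) • (1:Cl) - φ (1:ℤ) * φ (-1) := by
  have h := φ_pair' 0
  norm_num at h
  exact h

section Jzero
variable (A : List ℕ)

lemma acm1 (hA : ∀ m ∈ A, 1 < m) : ∀ m ∈ A, AC (-1) m := fun m hm =>
  ⟨by omega, by have := hA m hm; omega⟩
lemma ac0 (hA : ∀ m ∈ A, 1 < m) : ∀ m ∈ A, AC 0 m := fun m hm =>
  ⟨by have := hA m hm; omega, by have := hA m hm; omega⟩
lemma ac1 (hA : ∀ m ∈ A, 1 < m) : ∀ m ∈ A, AC 1 m := fun m hm =>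
  ⟨by omega, by have := hA m hm; omega⟩

lemma anti01 : φ 0 * φ (1:ℤ) = -(φ (1:ℤ) * φ 0) := φ_anti (by norm_num) (by norm_num)
lemma antim10 : φ (-1) * φ 0 = -(φ 0 * φ (-1)) := φ_anti (by norm_num) (by norm_num)

lemma e0a (hA : ∀ m ∈ A, 1 < m) :
    mkF ((φ (-1) * φ 0) * φl (A ++ [1])) = mkF (φl (A ++ [0])) := by
  have key : (φ (-1) * φ 0) * φ (1:ℤ) = φ 0 + (-1:ℂ) • (φ (1:ℤ) * (φ 0 * φ (-1))) := by
    rw [mul_assoc, anti01, mn, ← mul_assoc, φ_pair1, sub_mul', sm, one_mul',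
      mul_assoc, antim10, mn]
    module
  rw [φl_append, φl_singleton, Nat.cast_one, ← mul_assoc,
    pushPair _ _ A (acm1 A hA) (ac0 A hA), mul_assoc, key, mul_add', mkF_add, ms, ← sm]
  rw [show ((-1:ℂ) • φl A) * (φ (1:ℤ) * (φ 0 * φ (-1)))
      = (((-1:ℂ) • φl A) * (φ (1:ℤ) * φ 0)) * φ (-1) by simp only [mul_assoc],
    mkF_mul_φ_neg _ (show (-1:ℤ) < 0 by norm_num), add_zero, φl_append, φl_singleton, Nat.cast_zero]

lemma e0b (hA : ∀ m ∈ A, 1 < m) :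
    mkF ((φ (-1) * φ 0) * φl (A ++ [1, 0])) = mkF (φl A) := by
  have key : (φ (-1) * φ 0) * (φ (1:ℤ) * φ 0) = 1 + φ (1:ℤ) * φ (-1) := by
    rw [mul_assoc, ← mul_assoc (φ 0) (φ (1:ℤ)) (φ 0), anti01, nm, mn,
      mul_assoc (φ (1:ℤ)) (φ 0) (φ 0), φ0_sq, mul_one', φ_pair1]
    module
  rw [φl_append, φl_cons, φl_cons, φl_nil, Nat.cast_one, Nat.cast_zero, mul_one',
    ← mul_assoc, pushPair _ _ A (acm1 A hA) (ac0 A hA), mul_assoc, key, mul_add',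
    mul_one', mkF_add, ← mul_assoc, mkF_mul_φ_neg _ (show (-1:ℤ) < 0 by norm_num), add_zero]

lemma e0c (hA : ∀ m ∈ A, 1 < m) :
    mkF ((φ (-1) * φ 0) * φl A) = 0 := by
  rw [pushPair _ _ A (acm1 A hA) (ac0 A hA), antim10, mn, mkF_neg, ← mul_assoc,
    mkF_mul_φ_neg _ (show (-1:ℤ) < 0 by norm_num)]
  exact neg_zero

lemma e0d (hA : ∀ m ∈ A, 1 < m) :
    mkF ((φ (-1) * φ 0) * φl (A ++ [0])) = 0 := by
  rw [φl_append, φl_singleton, Nat.cast_zero, ← mul_assoc,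
    pushPair _ _ A (acm1 A hA) (ac0 A hA), mul_assoc, mul_assoc (φ (-1)) (φ 0) (φ 0),
    φ0_sq, mul_one', mkF_mul_φ_neg _ (show (-1:ℤ) < 0 by norm_num)]

lemma f0a (hA : ∀ m ∈ A, 1 < m) :
    mkF ((φ (1:ℤ) * φ 0) * φl A) = mkF (φl (A ++ [1, 0])) := by
  rw [pushPair _ _ A (ac1 A hA) (ac0 A hA), φl_append, φl_cons, φl_cons, φl_nil,
    Nat.cast_one, Nat.cast_zero, mul_one']

lemma f0b (hA : ∀ m ∈ A, 1 < m) :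
    mkF ((φ (1:ℤ) * φ 0) * φl (A ++ [0])) = mkF (φl (A ++ [1])) := by
  rw [φl_append, φl_singleton, Nat.cast_zero, ← mul_assoc,
    pushPair _ _ A (ac1 A hA) (ac0 A hA), mul_assoc, mul_assoc (φ (1:ℤ)) (φ 0) (φ 0),
    φ0_sq, mul_one', φl_append, φl_singleton, Nat.cast_one]

end Jzero

def pad (l : List ℕ) : List ℕ := if Even l.length then l else l ++ [0]

lemma vac_eq (l : List ℕ) : vac l = mkF (φl (pad l)) := rfl

lemma mkF_zero : mkF 0 = 0 := rfl

lemma mkF_smul (s : ℂ) (x : Cl) : mkF (s • x) = (algebraMap ℂ Cl s) • mkF x := by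
  rw [Algebra.smul_def, ← smul_mkF]

lemma smul_glue (p x y : Cl) (h : mkF (p * x) = mkF y) : p • mkF x = mkF y := by
  rw [smul_mkF]; exact h

lemma smul_glue0 (p x : Cl) (h : mkF (p * x) = 0) : p • mkF x = 0 := by
  rw [smul_mkF]; exact h

lemma scalar_glue (s : ℂ) (hss : s * s = 1) (p x y : Cl)
    (h : mkF (p * x) = mkF (s • y)) : (s • p) • mkF x = mkF y := by
  rw [smul_mkF, sm, mkF_smul, h, mkF_smul, smul_smul, ← map_mul, hss, map_one, one_smul]

lemma scalar_glue0 (s : ℂ) (p x : Cl) (h : mkF (p * x) = 0) :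
    (s • p) • mkF x = 0 := by
  rw [smul_mkF, sm, mkF_smul, h, smul_zero]

lemma decomp {l : List ℕ} (hs : l.Pairwise (· > ·)) {a : ℕ} (ha : a ∈ l) :
    ∃ A B, l = A ++ a :: B ∧ (∀ m ∈ A, a < m) ∧ (∀ m ∈ B, m < a) := by
  obtain ⟨A, B, rfl⟩ := List.append_of_mem ha
  have h := List.pairwise_append.mp hs
  exact ⟨A, B, rfl, fun m hm => h.2.2 m hm a (List.mem_cons_self (a := a) (l := B)),
    fun m hm => (List.pairwise_cons.mp h.2.1).1 m hm⟩

lemma map_id_of {L : List ℕ} {f : ℕ → ℕ} (h : ∀ m ∈ L, f m = m) : L.map f = L := by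
  induction L with
  | nil => rfl
  | cons a t ih => rw [List.map_cons, h a (by simp), ih (fun m hm => h m (by simp [hm]))]

lemma filter_ne0 {L : List ℕ} (h : ∀ m ∈ L, m ≠ 0) :
    L.filter (fun m => decide (m ≠ 0)) = L := by
  rw [List.filter_eq_self]
  intro a ha
  simpa using h a ha

lemma eStep_eq (j : ℕ) (hj : j ≠ 0) (A B : List ℕ) (hA : ∀ m ∈ A, j + 1 < m)
    (hB : ∀ m ∈ B, m < j + 1 ∧ 0 < m) :
    eStep j (A ++ (j+1) :: B) = A ++ j :: B := by
  unfold eStep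
  rw [List.map_append, List.map_cons, if_pos rfl,
    map_id_of (fun m hm => if_neg (by have := hA m hm; omega)),
    map_id_of (fun m hm => if_neg (by have := hB m hm; omega)),
    List.filter_append, List.filter_cons,
    filter_ne0 (fun m hm => by have := hA m hm; omega),
    filter_ne0 (fun m hm => by have := hB m hm; omega)]
  simp [hj]

lemma fStep_eq (j : ℕ) (hj : j ≠ 0) (A B : List ℕ) (hA : ∀ m ∈ A, j < m)
    (hB : ∀ m ∈ B, m < j) : fStep j (A ++ j :: B) = A ++ (j+1) :: B := by
  unfold fStep
  rw [if_neg hj, List.map_append, List.map_cons, if_pos rfl,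
    map_id_of (fun m hm => if_neg (by have := hA m hm; omega)),
    map_id_of (fun m hm => if_neg (by have := hB m hm; omega))]

lemma hss (j : ℕ) : ((-1:ℂ)^j) * ((-1:ℂ)^j) = 1 := by
  rw [← pow_add, Even.neg_one_pow ⟨j, rfl⟩]

lemma mem_pad {l : List ℕ} {m : ℕ} (hm : m ∈ pad l) : m ∈ l ∨ m = 0 := by
  unfold pad at hm
  by_cases hev : Even l.length
  · rw [if_pos hev] at hm; exact Or.inl hm
  · rw [if_neg hev] at hm
    rcases List.mem_append.mp hm with h | h
    · exact Or.inl h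
    · simp at h; exact Or.inr h

lemma E1 (l : List ℕ) (hs : l.Pairwise (· > ·)) (hp : ∀ m ∈ l, 0 < m) (j : ℕ)
    (h1 : j + 1 ∈ l) (h2 : j ∉ l) : eC j • vac l = vac (eStep j l) := by
  by_cases hj : j = 0
  · subst hj
    obtain ⟨A, B, rfl, hA, hB⟩ := decomp hs h1
    have hBnil : B = [] := by
      cases B with
      | nil => rfl
      | cons b t => exact absurd (hp b (by simp)) (by have := hB b (by simp); omega)
    subst hBnil
    have hA' : ∀ m ∈ A, 1 < m := fun m hm => hA m hm
    have hE : eStep 0 (A ++ [1]) = A := by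
      unfold eStep
      rw [List.map_append,
        map_id_of (fun m hm => if_neg (by have := hA' m hm; omega)),
        List.filter_append, filter_ne0 (fun m hm => by have := hA' m hm; omega)]
      simp
    rw [hE, vac_eq, vac_eq, show eC 0 = φ (-1) * φ 0 from if_pos rfl]
    by_cases hev : Even (A ++ [1]).length
    · have hAodd : ¬ Even A.length := by
        simp only [List.length_append, List.length_cons, List.length_nil] at hev
        simpa [Nat.even_add_one] using hev
      rw [show pad (A ++ [1]) = A ++ [1] from if_pos hev,
        show pad A = A ++ [0] from if_neg hAodd]
      exact smul_glue _ _ _ (e0a A hA')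
    · have hAev : Even A.length := by
        simp only [List.length_append, List.length_cons, List.length_nil] at hev
        simpa [Nat.even_add_one] using hev
      rw [show pad (A ++ [1]) = A ++ [1, 0] by
          rw [pad, if_neg hev]; simp,
        show pad A = A from if_pos hAev]
      exact smul_glue _ _ _ (e0b A hA')
  · obtain ⟨A, B, rfl, hA, hB⟩ := decomp hs h1
    have hB' : ∀ m ∈ B, m < j := by
      intro m hm
      have hbj := hB m hm
      have : m ≠ j := fun e => h2 (by
        rw [← e]; exact List.mem_append_right _ (List.mem_cons_of_mem _ hm))
      omega
    have hE := eStep_eq j hj A B hA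
      (fun m hm => ⟨hB m hm, hp m (List.mem_append_right _ (List.mem_cons_of_mem _ hm))⟩)
    rw [hE, vac_eq, vac_eq,
      show eC j = ((-1:ℂ)^j) • (φ (-(j:ℤ) - 1) * φ (j:ℤ)) from if_neg hj]
    by_cases hev : Even (A ++ (j+1) :: B).length
    · have hev2 : Even (A ++ j :: B).length := by
        simpa [List.length_append] using hev
      rw [show pad (A ++ (j+1) :: B) = A ++ (j+1) :: B from if_pos hev,
        show pad (A ++ j :: B) = A ++ j :: B from if_pos hev2]
      exact scalar_glue _ (hss j) _ _ _ (e_main j hj A B hA hB')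
    · have hev2 : ¬ Even (A ++ j :: B).length := by
        simpa [List.length_append] using hev
      rw [show pad (A ++ (j+1) :: B) = A ++ (j+1) :: (B ++ [0]) by
          rw [pad, if_neg hev]; simp,
        show pad (A ++ j :: B) = A ++ j :: (B ++ [0]) by
          rw [pad, if_neg hev2]; simp]
      refine scalar_glue _ (hss j) _ _ _ (e_main j hj A (B ++ [0]) hA ?_)
      intro m hm
      rcases List.mem_append.mp hm with h | h
      · exact hB' m h
      · simp at h; omega

lemma E0 (l : List ℕ) (hs : l.Pairwise (· > ·)) (hp : ∀ m ∈ l, 0 < m) (j : ℕ)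
    (h : ¬ (j + 1 ∈ l ∧ j ∉ l)) : eC j • vac l = 0 := by
  by_cases hj : j = 0
  · subst hj
    have h1 : (1:ℕ) ∉ l := fun hin => h ⟨hin, fun h0 => by have := hp 0 h0; omega⟩
    have hl : ∀ m ∈ l, 1 < m := by
      intro m hm
      have := hp m hm
      have : m ≠ 1 := fun e => h1 (e ▸ hm)
      have := hp m hm
      omega
    rw [vac_eq, show eC 0 = φ (-1) * φ 0 from if_pos rfl]
    by_cases hev : Even l.length
    · rw [show pad l = l from if_pos hev]
      exact smul_glue0 _ _ (e0c l hl)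
    · rw [show pad l = l ++ [0] from if_neg hev]
      exact smul_glue0 _ _ (e0d l hl)
  · push_neg at h
    rw [vac_eq, show eC j = ((-1:ℂ)^j) • (φ (-(j:ℤ) - 1) * φ (j:ℤ)) from if_neg hj]
    by_cases hin : j ∈ l
    · obtain ⟨A, B, rfl, hA, hB⟩ := decomp hs hin
      have kill : ∀ B' : List ℕ,
          (φ (-(j:ℤ) - 1) * φ (j:ℤ)) * φl (A ++ j :: B') = 0 := fun B' => by
        rw [mul_assoc, φj_kill j hj A B' hA, mul_zero']
      by_cases hev : Even (A ++ j :: B).length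
      · rw [show pad (A ++ j :: B) = A ++ j :: B from if_pos hev]
        exact scalar_glue0 _ _ _ (by rw [kill B]; exact mkF_zero)
      · rw [show pad (A ++ j :: B) = A ++ j :: (B ++ [0]) by
            rw [pad, if_neg hev]; simp]
        exact scalar_glue0 _ _ _ (by rw [kill (B ++ [0])]; exact mkF_zero)
    · have hnot1 : j + 1 ∉ l := fun c => hin (h c)
      refine scalar_glue0 _ _ _ (e_zero2 j hj (pad l) ?_)
      intro m hm
      rcases mem_pad hm with hm' | hm'
      · exact ⟨fun e => hin (e ▸ hm'), fun e => hnot1 (e ▸ hm')⟩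
      · subst hm'; omega

lemma F1 (l : List ℕ) (hs : l.Pairwise (· > ·)) (hp : ∀ m ∈ l, 0 < m) (j : ℕ)
    (h1 : j = 0 ∨ j ∈ l) (h2 : j + 1 ∉ l) : fC j • vac l = vac (fStep j l) := by
  by_cases hj : j = 0
  · subst hj
    have hl : ∀ m ∈ l, 1 < m := by
      intro m hm
      have := hp m hm
      have : m ≠ 1 := fun e => h2 (by simpa [e] using hm)
      omega
    rw [show fStep 0 l = l ++ [1] from if_pos rfl, vac_eq, vac_eq,
      show fC 0 = φ 1 * φ 0 from if_pos rfl]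
    by_cases hev : Even l.length
    · have hev2 : ¬ Even (l ++ [1]).length := by
        simpa [List.length_append, Nat.even_add_one] using hev
      rw [show pad l = l from if_pos hev,
        show pad (l ++ [1]) = l ++ [1, 0] by rw [pad, if_neg hev2]; simp]
      exact smul_glue _ _ _ (f0a l hl)
    · have hev2 : Even (l ++ [1]).length := by
        simpa [List.length_append, Nat.even_add_one] using hev
      rw [show pad l = l ++ [0] from if_neg hev,
        show pad (l ++ [1]) = l ++ [1] from if_pos hev2]
      exact smul_glue _ _ _ (f0b l hl)
  · have hin : j ∈ l := h1.resolve_left hj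
    obtain ⟨A, B, rfl, hA, hB⟩ := decomp hs hin
    have hA' : ∀ m ∈ A, j + 1 < m := by
      intro m hm
      have := hA m hm
      have : m ≠ j + 1 := fun e => h2 (by
        rw [← e]; exact List.mem_append_left _ hm)
      have := hA m hm
      omega
    rw [fStep_eq j hj A B hA hB, vac_eq, vac_eq,
      show fC j = ((-1:ℂ)^j) • (φ ((j:ℤ) + 1) * φ (-(j:ℤ))) from if_neg hj]
    by_cases hev : Even (A ++ j :: B).length
    · have hev2 : Even (A ++ (j+1) :: B).length := by
        simpa [List.length_append] using hev
      rw [show pad (A ++ j :: B) = A ++ j :: B from if_pos hev,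
        show pad (A ++ (j+1) :: B) = A ++ (j+1) :: B from if_pos hev2]
      exact scalar_glue _ (hss j) _ _ _ (f_main j hj A B hA' hB)
    · have hev2 : ¬ Even (A ++ (j+1) :: B).length := by
        simpa [List.length_append] using hev
      rw [show pad (A ++ j :: B) = A ++ j :: (B ++ [0]) by
          rw [pad, if_neg hev]; simp,
        show pad (A ++ (j+1) :: B) = A ++ (j+1) :: (B ++ [0]) by
          rw [pad, if_neg hev2]; simp]
      refine scalar_glue _ (hss j) _ _ _ (f_main j hj A (B ++ [0]) hA' ?_)
      intro m hm
      rcases List.mem_append.mp hm with h | h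
      · exact hB m h
      · simp at h; omega

lemma F0 (l : List ℕ) (hs : l.Pairwise (· > ·)) (hp : ∀ m ∈ l, 0 < m) (j : ℕ)
    (h : ¬ ((j = 0 ∨ j ∈ l) ∧ j + 1 ∉ l)) : fC j • vac l = 0 := by
  have hcast0 : φ (1:ℤ) * φ (0:ℤ) = φ (((0:ℕ):ℤ) + 1) * φ (-((0:ℕ):ℤ)) := by norm_num
  by_cases hin : j + 1 ∈ l
  · obtain ⟨A, B, rfl, hA, hB⟩ := decomp hs hin
    have kill : ∀ B' : List ℕ,
        (φ ((j:ℤ) + 1) * φ (-(j:ℤ))) * φl (A ++ (j+1) :: B') = 0 :=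
      fun B' => φf_kill j A B' hA
    have main : ∀ B' : List ℕ,
        fC j • mkF (φl (A ++ (j+1) :: B')) = 0 := by
      intro B'
      by_cases hj : j = 0
      · subst hj
        rw [show fC 0 = φ 1 * φ 0 from if_pos rfl]
        refine smul_glue0 _ _ ?_
        rw [hcast0, kill B']
        exact mkF_zero
      · rw [show fC j = ((-1:ℂ)^j) • (φ ((j:ℤ) + 1) * φ (-(j:ℤ))) from if_neg hj]
        exact scalar_glue0 _ _ _ (by rw [kill B']; exact mkF_zero)
    by_cases hev : Even (A ++ (j+1) :: B).length
    · rw [vac_eq, show pad (A ++ (j+1) :: B) = A ++ (j+1) :: B from if_pos hev]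
      exact main B
    · rw [vac_eq, show pad (A ++ (j+1) :: B) = A ++ (j+1) :: (B ++ [0]) by
        rw [pad, if_neg hev]; simp]
      exact main (B ++ [0])
  · have hj : j ≠ 0 := by
      intro e
      exact h ⟨Or.inl e, hin⟩
    have hinj : j ∉ l := by
      intro c
      exact h ⟨Or.inr c, hin⟩
    rw [vac_eq, show fC j = ((-1:ℂ)^j) • (φ ((j:ℤ) + 1) * φ (-(j:ℤ))) from if_neg hj]
    refine scalar_glue0 _ _ _ (f_zero2 j hj (pad l) ?_)
    intro m hm
    rcases mem_pad hm with hm' | hm'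
    · exact fun e => hinj (e ▸ hm')
    · omega


end Lemmas

/-- The action of `𝖾_j` and `𝖿_j` on the basis `|λ⟩` of the Fock space. -/
theorem e_f_action_on_fock (l : List ℕ) (hs : l.Pairwise (· > ·))
    (hp : ∀ m ∈ l, 0 < m) (j : ℕ) :
    ((j + 1 ∈ l ∧ j ∉ l) → eC j • vac l = vac (eStep j l)) ∧
    (¬ (j + 1 ∈ l ∧ j ∉ l) → eC j • vac l = 0) ∧
    (((j = 0 ∨ j ∈ l) ∧ j + 1 ∉ l) → fC j • vac l = vac (fStep j l)) ∧
    (¬ ((j = 0 ∨ j ∈ l) ∧ j + 1 ∉ l) → fC j • vac l = 0) := by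
  exact ⟨fun ⟨a, b⟩ => E1 l hs hp j a b, E0 l hs hp j,
    fun ⟨a, b⟩ => F1 l hs hp j a b, F0 l hs hp j⟩

end

end NeutralFermions
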